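/- The poset of finite strictly monotonic partial functions from T to ℚ, ordered by reverse inclusion, is ccc whenever T is a well-stratified tree with no uncountable branches. -/

import Mathlib

/-- A partial order is rooted if it has a minimum element. -/
def IsRooted (X : Type*) [PartialOrder X] : Prop := ∃ r : X, ∀ x, r ≤ x

/-- The set of predecessors of every element is linearly ordered. -/
def DownLinear (X : Type*) [PartialOrder X] : Prop :=
  ∀ x y z : X, y ≤ x → z ≤ x → y ≤ z ∨ z ≤ y

/-- A well-stratified tree: a rooted partial order in which the set of
predecessors of every element is well-ordered. -/
def IsWSTree (T : Type*) [PartialOrder T] : Prop :=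
  IsRooted T ∧ DownLinear T ∧ ∀ x : T, (Set.Iio x).IsWF

/-- The specialising forcing for a tree `T`: finite strictly monotonic
partial functions `T ⇀ ℚ`, coded as functions `T → Option ℚ` with finite
support. -/
def SpecPoset (T : Type*) [PartialOrder T] : Type _ :=
  {p : T → Option ℚ // {x | p x ≠ none}.Finite ∧
    ∀ x y qx qy, p x = some qx → p y = some qy → x < y → qx < qy}

/-- The specialising forcing is ordered by reverse extension. -/
instance (T : Type*) [PartialOrder T] : PartialOrder (SpecPoset T) where
  le p q := ∀ x r, q.1 x = some r → p.1 x = some r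
  le_refl p := fun _ _ h => h
  le_trans p q r hpq hqr := fun x s h => hpq x s (hqr x s h)
  le_antisymm p q hpq hqp := by
    apply Subtype.ext; funext x
    cases hp : p.1 x with
    | none =>
      cases hq : q.1 x with
      | none => rfl
      | some s => exact absurd (hpq x s hq) (by simp [hp])
    | some s => exact (hqp x s hp).symm

section Helpers

open Set

private lemma exists_uncountable_fiber {ι κ : Type*} [Countable κ] (f : ι → κ)
    (S : Set ι) (hS : ¬S.Countable) : ∃ k, ¬{α | α ∈ S ∧ f α = k}.Countable := by
  by_contra h
  push_neg at h
  refine hS (Set.Countable.mono ?_ (Set.countable_iUnion h))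
  intro a ha
  exact Set.mem_iUnion.2 ⟨f a, ha, rfl⟩

private lemma delta_system {γ : Type*} [DecidableEq γ] :
    ∀ (n : ℕ) {ι : Type*} (F : ι → Finset γ) (S : Set ι),
      ¬S.Countable → (∀ α ∈ S, (F α).card = n) →
      ∃ S' R, S' ⊆ S ∧ ¬S'.Countable ∧ (∀ α ∈ S', R ⊆ F α) ∧
        ∀ α ∈ S', ∀ β ∈ S', α ≠ β → F α ∩ F β = R := by
  intro n
  induction n with
  | zero =>
    intro ι F S hS hcard
    refine ⟨S, ∅, Set.Subset.rfl, hS, fun α _ => Finset.empty_subset _, ?_⟩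
    intro α hα β hβ _
    have h1 : F α = ∅ := Finset.card_eq_zero.mp (hcard α hα)
    simp [h1]
  | succ n ih =>
    intro ι F S hS hcard
    by_cases hx : ∃ x, ¬{α | α ∈ S ∧ x ∈ F α}.Countable
    · obtain ⟨x, hx⟩ := hx
      obtain ⟨S', R', hsub, hunc, hR, hInt⟩ :=
        ih (fun α => (F α).erase x) {α | α ∈ S ∧ x ∈ F α} hx (fun α hα => by
          rw [Finset.card_erase_of_mem hα.2, hcard α hα.1]; rfl)
      refine ⟨S', insert x R', fun α hα => (hsub hα).1, hunc, ?_, ?_⟩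
      · intro α hα
        exact Finset.insert_subset (hsub hα).2 ((hR α hα).trans (Finset.erase_subset _ _))
      · intro α hα β hβ hne
        ext z
        simp only [Finset.mem_inter, Finset.mem_insert]
        constructor
        · rintro ⟨hzα, hzβ⟩
          by_cases hz : z = x
          · exact Or.inl hz
          · right
            have h2 := hInt α hα β hβ hne
            have : z ∈ (F α).erase x ∩ (F β).erase x :=
              Finset.mem_inter.2 ⟨Finset.mem_erase.2 ⟨hz, hzα⟩, Finset.mem_erase.2 ⟨hz, hzβ⟩⟩
            rw [h2] at this
            exact this
        · rintro (rfl | hz)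
          · exact ⟨(hsub hα).2, (hsub hβ).2⟩
          · have h2 := hInt α hα β hβ hne
            have hz' : z ∈ (F α).erase x ∩ (F β).erase x := by rw [h2]; exact hz
            exact ⟨Finset.mem_of_mem_erase (Finset.mem_inter.1 hz').1,
              Finset.mem_of_mem_erase (Finset.mem_inter.1 hz').2⟩
    · push_neg at hx
      have hzorn : ∀ c ⊆ {D : Set ι | D ⊆ S ∧ D.Pairwise fun α β => Disjoint (F α) (F β)},
          IsChain (· ⊆ ·) c → ∃ ub ∈ {D : Set ι | D ⊆ S ∧
            D.Pairwise fun α β => Disjoint (F α) (F β)}, ∀ s ∈ c, s ⊆ ub := by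
        intro c hc hchain
        refine ⟨⋃₀ c, ⟨Set.sUnion_subset fun d hd => (hc hd).1, ?_⟩,
          fun s hs => Set.subset_sUnion_of_mem hs⟩
        intro α hα β hβ hne
        obtain ⟨d1, hd1, hαd⟩ := hα
        obtain ⟨d2, hd2, hβd⟩ := hβ
        rcases hchain.total hd1 hd2 with h | h
        · exact (hc hd2).2 (h hαd) hβd hne
        · exact (hc hd1).2 hαd (h hβd) hne
      obtain ⟨M, hM⟩ := zorn_subset _ hzorn
      by_cases hMc : M.Countable
      · exfalso
        set N := M ∪ ⋃ α ∈ M, {β | β ∈ S ∧ ¬Disjoint (F β) (F α)} with hN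
        have hNc : N.Countable := by
          refine hMc.union (Set.Countable.biUnion hMc fun α _ => ?_)
          have hsub : {β | β ∈ S ∧ ¬Disjoint (F β) (F α)} ⊆
              ⋃ x ∈ (F α : Set γ), {β | β ∈ S ∧ x ∈ F β} := by
            intro β hβ
            obtain ⟨x, hx1, hx2⟩ := Finset.not_disjoint_iff.1 hβ.2
            exact Set.mem_biUnion hx2 ⟨hβ.1, hx1⟩
          exact Set.Countable.mono hsub
            ((F α).finite_toSet.countable.biUnion fun x _ => hx x)
        obtain ⟨β, hβS, hβN⟩ : ∃ β, β ∈ S ∧ β ∉ N := by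
          by_contra hc'
          push_neg at hc'
          exact hS (hNc.mono hc')
        have hβM : β ∉ M := fun h => hβN (Or.inl h)
        have hins : insert β M ∈
            {D : Set ι | D ⊆ S ∧ D.Pairwise fun α β => Disjoint (F α) (F β)} := by
          refine ⟨Set.insert_subset hβS hM.1.1, hM.1.2.insert fun α hα hne => ?_⟩
          have hd : Disjoint (F β) (F α) := by
            by_contra hnd
            exact hβN (Or.inr (Set.mem_biUnion hα ⟨hβS, hnd⟩))
          exact ⟨hd, hd.symm⟩
        have := hM.2 hins (Set.subset_insert β M)
        exact hβM (this (Set.mem_insert β M))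
      · exact ⟨M, ∅, hM.1.1, hMc, fun α _ => Finset.empty_subset _,
          fun α hα β hβ hne => Finset.disjoint_iff_inter_eq_empty.1 (hM.1.2 hα hβ hne)⟩

end Helpers

section Helpers2

variable {T : Type*} [PartialOrder T]

private lemma iio_countable (hdl : DownLinear T)
    (hcc : ∀ C : Set T, IsChain (· ≤ ·) C → C.Countable) (x : T) :
    (Set.Iio x).Countable :=
  hcc _ fun y hy z hz _ => hdl x y z (le_of_lt hy) (le_of_lt hz)

private lemma no_linked (hdl : DownLinear T)
    (hcc : ∀ C : Set T, IsChain (· ≤ ·) C → C.Countable)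
    {ι : Type*} (S : Set ι) (hS : ¬S.Countable) (F : ι → Finset T)
    (n : ℕ) (e : ι → ℕ → T)
    (he : ∀ α ∈ S, ∀ z ∈ F α, ∃ i, i < n ∧ e α i = z)
    (hdisj : ∀ α ∈ S, ∀ β ∈ S, α ≠ β → ∀ x, x ∈ F α → x ∉ F β)
    (hlink : ∀ α ∈ S, ∀ β ∈ S, α ≠ β → ∃ x ∈ F α, ∃ y ∈ F β, x < y ∨ y < x) :
    False := by
  classical
  -- the filter of relatively co-countable sets
  let L : Filter ι :=
    { sets := {X | (S \ X).Countable}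
      univ_sets := by simp
      sets_of_superset := fun hX hXY => Set.Countable.mono (Set.diff_subset_diff_right hXY) hX
      inter_sets := by
        intro X Y hX hY
        have hsub : S \ (X ∩ Y) ⊆ (S \ X) ∪ (S \ Y) := by
          intro a ha
          by_cases h : a ∈ X
          · exact Or.inr ⟨ha.1, fun hy => ha.2 ⟨h, hy⟩⟩
          · exact Or.inl ⟨ha.1, h⟩
        exact Set.Countable.mono hsub (hX.union hY) }
  have hmemL : ∀ X : Set ι, X ∈ L ↔ (S \ X).Countable := fun X => Iff.rfl
  haveI : L.NeBot := by
    refine ⟨fun h => hS ?_⟩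
    have h0 : (∅ : Set ι) ∈ L := by rw [h]; exact Filter.mem_bot
    rw [hmemL] at h0
    simpa using h0
  set U : Ultrafilter ι := Ultrafilter.of L with hUdef
  have hUL : ∀ X : Set ι, (S \ X).Countable → X ∈ U := fun X hX =>
    Ultrafilter.of_le L ((hmemL X).2 hX)
  have hUunc : ∀ X ∈ U, ¬(S ∩ X).Countable := by
    intro X hXU hc
    have hcompl : Xᶜ ∈ U := hUL _ (by rw [Set.diff_compl]; exact hc)
    exact (Ultrafilter.compl_mem_iff_notMem.1 hcompl) hXU
  have hUne : ∀ X ∈ U, ∃ α, α ∈ S ∧ α ∈ X := by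
    intro X hX
    by_contra h
    push_neg at h
    refine hUunc X hX (Set.Countable.mono ?_ Set.countable_empty)
    rintro a ⟨h1, h2⟩
    exact (h a h1 h2).elim
  -- predecessor sets are countable
  have hDown : ∀ β : ι, {t : T | ∃ y ∈ F β, t < y}.Countable := by
    intro β
    have hsub : {t : T | ∃ y ∈ F β, t < y} ⊆ ⋃ y ∈ (F β : Set T), Set.Iio y := by
      rintro t ⟨y, hy, ht⟩
      exact Set.mem_biUnion hy ht
    exact Set.Countable.mono hsub
      (Set.Countable.biUnion (F β).finite_toSet.countable fun y _ => iio_countable hdl hcc y)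
  -- the "linked from below" sets are large
  have hG : ∀ β ∈ S, {α | α ∈ S ∧ α ≠ β ∧ ∃ w ∈ F β, ∃ z ∈ F α, w < z} ∈ U := by
    intro β hβ
    apply hUL
    have hBad : {α | α ∈ S ∧ ∃ x, x ∈ F α ∧ x ∈ {t : T | ∃ y ∈ F β, t < y}}.Countable := by
      haveI := (hDown β).to_subtype
      have hg : ∀ a : {α // α ∈ S ∧ ∃ x, x ∈ F α ∧ x ∈ {t : T | ∃ y ∈ F β, t < y}},
          ∃ x : {t : T | ∃ y ∈ F β, t < y}, (x : T) ∈ F (a : ι) := by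
        rintro ⟨a, haS, x, hx1, hx2⟩
        exact ⟨⟨x, hx2⟩, hx1⟩
      choose g hgspec using hg
      have hginj : Function.Injective g := by
        intro a1 a2 hg12
        by_contra hne
        have hne' : (a1 : ι) ≠ (a2 : ι) := fun h => hne (Subtype.ext h)
        have h2 : ((g a1 : {t : T | ∃ y ∈ F β, t < y}) : T) ∈ F (a2 : ι) := by
          rw [hg12]; exact hgspec a2
        exact hdisj _ a1.2.1 _ a2.2.1 hne' _ (hgspec a1) h2
      exact Set.countable_coe_iff.mp hginj.countable
    refine Set.Countable.mono ?_ (hBad.insert β)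
    intro α hα
    obtain ⟨hαS, hαG⟩ := hα
    by_cases hne : α = β
    · exact Set.mem_insert_iff.2 (Or.inl hne)
    · obtain ⟨x, hx, y, hy, hxy⟩ := hlink α hαS β hβ hne
      rcases hxy with h | h
      · exact Set.mem_insert_iff.2 (Or.inr ⟨hαS, x, hx, y, hy, h⟩)
      · exact absurd ⟨hαS, hne, y, hy, x, hx, h⟩ hαG
  -- pick, for each β, an element of F β sitting below a fixed coordinate of U-many F α
  have hclaim : ∀ β ∈ S, ∃ (w : T) (i : ℕ), w ∈ F β ∧ i < n ∧ {α | w < e α i} ∈ U := by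
    intro β hβ
    have hGbU := hG β hβ
    have hP : ∀ α ∈ {α | α ∈ S ∧ α ≠ β ∧ ∃ w ∈ F β, ∃ z ∈ F α, w < z},
        ∃ wi : T × ℕ, wi.1 ∈ F β ∧ wi.2 < n ∧ wi.1 < e α wi.2 := by
      rintro α ⟨hαS, hne, w, hw, z, hz, hwz⟩
      obtain ⟨i, hi, hei⟩ := he α hαS z hz
      exact ⟨(w, i), hw, hi, by rw [hei]; exact hwz⟩
    set c : ι → Option (T × ℕ) := fun α =>
      if h : ∃ wi : T × ℕ, wi.1 ∈ F β ∧ wi.2 < n ∧ wi.1 < e α wi.2 then some h.choose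
      else none with hcdef
    have hVfin : (insert none (some '' ((F β : Set T) ×ˢ Set.Iio n)) :
        Set (Option (T × ℕ))).Finite :=
      (((F β).finite_toSet.prod (Set.finite_Iio n)).image some).insert none
    have hcV : Set.univ ⊆ c ⁻¹' (insert none (some '' ((F β : Set T) ×ˢ Set.Iio n))) := by
      intro α _
      by_cases h : ∃ wi : T × ℕ, wi.1 ∈ F β ∧ wi.2 < n ∧ wi.1 < e α wi.2
      · have hspec := h.choose_spec
        have : c α = some h.choose := by rw [hcdef]; exact dif_pos h
        rw [Set.mem_preimage, this]
        exact Set.mem_insert_iff.2 (Or.inr ⟨h.choose, ⟨hspec.1, hspec.2.1⟩, rfl⟩)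
      · have : c α = none := by rw [hcdef]; exact dif_neg h
        rw [Set.mem_preimage, this]
        exact Set.mem_insert _ _
    have hVU : (insert none (some '' ((F β : Set T) ×ˢ Set.Iio n)) :
        Set (Option (T × ℕ))) ∈ Ultrafilter.map c U :=
      Ultrafilter.mem_map.2 (Filter.mem_of_superset Filter.univ_mem hcV)
    obtain ⟨v, hvV, hvpure⟩ := Ultrafilter.eq_pure_of_finite_mem hVfin hVU
    have hfib : {α | c α = v} ∈ U := by
      have h1 : {v} ∈ Ultrafilter.map c U := by
        rw [hvpure]; exact Ultrafilter.mem_pure.2 rfl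
      have h2 := Ultrafilter.mem_map.1 h1
      refine Filter.mem_of_superset h2 ?_
      intro a ha
      exact ha
    rcases v with _ | ⟨w, i⟩
    · exfalso
      obtain ⟨α, hαS, hα1, hα2⟩ := hUne _ (Filter.inter_mem hGbU hfib)
      have hd := hP α hα1
      have : c α = some hd.choose := by rw [hcdef]; exact dif_pos hd
      rw [hα2] at this
      exact Option.some_ne_none _ this.symm
    · obtain ⟨α0, -, hα0⟩ := hUne _ hfib
      have hd : ∃ wi : T × ℕ, wi.1 ∈ F β ∧ wi.2 < n ∧ wi.1 < e α0 wi.2 := by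
        by_contra h
        have : c α0 = none := by rw [hcdef]; exact dif_neg h
        rw [hα0] at this
        exact Option.some_ne_none _ this
      have hch : c α0 = some hd.choose := by rw [hcdef]; exact dif_pos hd
      have hv : hd.choose = (w, i) := by
        have := hch.symm.trans hα0
        exact Option.some.inj this
      have hspec0 := hd.choose_spec
      rw [hv] at hspec0
      refine ⟨w, i, hspec0.1, hspec0.2.1, ?_⟩
      refine Filter.mem_of_superset hfib ?_
      intro α hα
      have hd' : ∃ wi : T × ℕ, wi.1 ∈ F β ∧ wi.2 < n ∧ wi.1 < e α wi.2 := by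
        by_contra h
        have : c α = none := by rw [hcdef]; exact dif_neg h
        rw [hα] at this
        exact Option.some_ne_none _ this
      have hch' : c α = some hd'.choose := by rw [hcdef]; exact dif_pos hd'
      have hv' : hd'.choose = (w, i) := Option.some.inj (hch'.symm.trans hα)
      have hspec' := hd'.choose_spec
      rw [hv'] at hspec'
      exact hspec'.2.2
  -- T is nonempty
  have hSne : ∃ β, β ∈ S := by
    rcases Set.eq_empty_or_nonempty S with h | h
    · exact absurd (h ▸ Set.countable_empty) hS
    · exact h
  obtain ⟨β0, hβ0⟩ := hSne
  obtain ⟨w0, -, -⟩ := hclaim β0 hβ0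
  haveI : Nonempty T := ⟨w0⟩
  choose! w idx hwF hidx hwU using hclaim
  -- pigeonhole on the coordinate
  obtain ⟨i, hi⟩ := exists_uncountable_fiber idx S hS
  have hCchain : IsChain (· ≤ ·) (w '' {β | β ∈ S ∧ idx β = i}) := by
    rintro _ ⟨β1, hβ1, rfl⟩ _ ⟨β2, hβ2, rfl⟩ _
    obtain ⟨α, -, hα1, hα2⟩ := hUne _ (Filter.inter_mem (hwU β1 hβ1.1) (hwU β2 hβ2.1))
    have h1 : w β1 < e α i := by rw [← hβ1.2]; exact hα1
    have h2 : w β2 < e α i := by rw [← hβ2.2]; exact hα2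
    exact hdl (e α i) (w β1) (w β2) (le_of_lt h1) (le_of_lt h2)
  apply hi
  refine Set.countable_of_injective_of_countable_image ?_ (hcc _ hCchain)
  intro β1 hβ1 β2 hβ2 hww
  by_contra hne
  have hw2 : w β1 ∈ F β2 := by rw [hww]; exact hwF β2 hβ2.1
  exact hdisj β1 hβ1.1 β2 hβ2.1 hne _ (hwF β1 hβ1.1) hw2

end Helpers2

/-- The specialising forcing of a well-stratified tree with no uncountable
branches is ccc: every pairwise incompatible set of conditions is countable. -/
theorem specialising_forcing_ccc (T : Type*) [PartialOrder T]
    (hT : IsWSTree T)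
    (hcb : ∀ B : Set T, IsMaxChain (· ≤ ·) B → B.Countable) :
    ∀ A : Set (SpecPoset T),
      (A.Pairwise fun p q => ¬ ∃ r : SpecPoset T, r ≤ p ∧ r ≤ q) →
      A.Countable := by
  classical
  intro A hA
  by_contra hAc
  obtain ⟨-, hdl, -⟩ := hT
  rcases isEmpty_or_nonempty T with hT0 | hT0
  · refine hAc (Set.Subsingleton.countable ?_)
    intro p _ q _
    apply Subtype.ext; funext x
    exact (hT0.false x).elim
  have hcc : ∀ C : Set T, IsChain (· ≤ ·) C → C.Countable := by
    intro C hC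
    obtain ⟨M, hM, hCM⟩ := hC.exists_maxChain
    exact Set.Countable.mono hCM (hcb M hM)
  set dom : SpecPoset T → Finset T := fun p => p.2.1.toFinset with hdomdef
  have hdom : ∀ (p : SpecPoset T) (x : T), x ∈ dom p ↔ p.1 x ≠ none := fun p x =>
    Set.Finite.mem_toFinset _
  obtain ⟨m, hm⟩ := exists_uncountable_fiber (fun p => (dom p).card) A hAc
  obtain ⟨S2, R, hS2sub, hS2unc, hRsub, hRint⟩ :=
    delta_system m dom {p | p ∈ A ∧ (dom p).card = m} hm (fun p hp => hp.2)
  obtain ⟨k, hk⟩ := exists_uncountable_fiber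
    (fun (p : SpecPoset T) (x : {x // x ∈ R}) => p.1 x) S2 hS2unc
  set A2 := {p : SpecPoset T | p ∈ S2 ∧
    (fun (x : {x // x ∈ R}) => p.1 x) = k} with hA2def
  have hA2A : ∀ p ∈ A2, p ∈ A := fun p hp => (hS2sub hp.1).1
  have hagree : ∀ p ∈ A2, ∀ q ∈ A2, ∀ x, x ∈ R → p.1 x = q.1 x := by
    intro p hp q hq x hx
    exact congrFun (hp.2.trans hq.2.symm) ⟨x, hx⟩
  have hRdom : ∀ p ∈ A2, R ⊆ dom p := fun p hp => hRsub p hp.1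
  have hint : ∀ p ∈ A2, ∀ q ∈ A2, p ≠ q → dom p ∩ dom q = R :=
    fun p hp q hq hne => hRint p hp.1 q hq.1 hne
  -- off-root domains are pairwise somewhere-comparable
  have hlink : ∀ p ∈ A2, ∀ q ∈ A2, p ≠ q →
      ∃ x ∈ dom p \ R, ∃ y ∈ dom q \ R, x < y ∨ y < x := by
    intro p hp q hq hne
    by_contra hno
    push_neg at hno
    -- hno : ∀ x ∈ dom p \ R, ∀ y ∈ dom q \ R, ¬x < y ∧ ¬y < x
    set rf : T → Option ℚ := fun t => if p.1 t = none then q.1 t else p.1 t with hrfdef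
    have hrf1 : ∀ t, p.1 t ≠ none → rf t = p.1 t := by
      intro t h; rw [hrfdef]; simp only [if_neg h]
    have hrf2 : ∀ t, p.1 t = none → rf t = q.1 t := by
      intro t h; rw [hrfdef]; simp only [if_pos h]
    have hfin : {t | rf t ≠ none}.Finite := by
      refine Set.Finite.subset (p.2.1.union q.2.1) ?_
      intro t ht
      by_cases h : p.1 t = none
      · refine Or.inr ?_
        show q.1 t ≠ none
        rw [← hrf2 t h]; exact ht
      · exact Or.inl h
    have hmono : ∀ x y qx qy, rf x = some qx → rf y = some qy → x < y → qx < qy := by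
      intro x y qx qy hx hy hxy
      by_cases hpx : p.1 x = none
      · rw [hrf2 x hpx] at hx
        have hxq : x ∈ dom q := (hdom q x).2 (by rw [hx]; exact Option.some_ne_none _)
        have hxnp : x ∉ dom p := fun h => ((hdom p x).1 h) hpx
        have hxnR : x ∉ R := fun h => hxnp (hRdom p hp h)
        by_cases hpy : p.1 y = none
        · rw [hrf2 y hpy] at hy
          exact q.2.2 x y qx qy hx hy hxy
        · rw [hrf1 y hpy] at hy
          have hyp : y ∈ dom p := (hdom p y).2 (by rw [hy]; exact Option.some_ne_none _)
          by_cases hyq : y ∈ dom q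
          · have hyR : y ∈ R := by
              rw [← hint p hp q hq hne]; exact Finset.mem_inter.2 ⟨hyp, hyq⟩
            have hqy : q.1 y = some qy := by rw [← hagree p hp q hq y hyR]; exact hy
            exact q.2.2 x y qx qy hx hqy hxy
          · have hynR : y ∉ R := fun h => hyq (hRdom q hq h)
            exact absurd hxy (hno y (Finset.mem_sdiff.2 ⟨hyp, hynR⟩)
              x (Finset.mem_sdiff.2 ⟨hxq, hxnR⟩)).2
      · rw [hrf1 x hpx] at hx
        have hxp : x ∈ dom p := (hdom p x).2 (by rw [hx]; exact Option.some_ne_none _)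
        by_cases hpy : p.1 y = none
        · rw [hrf2 y hpy] at hy
          have hyq : y ∈ dom q := (hdom q y).2 (by rw [hy]; exact Option.some_ne_none _)
          have hynp : y ∉ dom p := fun h => ((hdom p y).1 h) hpy
          have hynR : y ∉ R := fun h => hynp (hRdom p hp h)
          by_cases hxq : x ∈ dom q
          · have hxR : x ∈ R := by
              rw [← hint p hp q hq hne]; exact Finset.mem_inter.2 ⟨hxp, hxq⟩
            have hqx : q.1 x = some qx := by rw [← hagree p hp q hq x hxR]; exact hx
            exact q.2.2 x y qx qy hqx hy hxy
          · have hxnR : x ∉ R := fun h => hxq (hRdom q hq h)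
            exact absurd hxy (hno x (Finset.mem_sdiff.2 ⟨hxp, hxnR⟩)
              y (Finset.mem_sdiff.2 ⟨hyq, hynR⟩)).1
        · rw [hrf1 y hpy] at hy
          exact p.2.2 x y qx qy hx hy hxy
    set r : SpecPoset T := ⟨rf, hfin, hmono⟩ with hrdef
    have hrp : r ≤ p := by
      intro t s h
      show rf t = some s
      rw [hrf1 t (by rw [h]; exact Option.some_ne_none _)]; exact h
    have hrq : r ≤ q := by
      intro t s h
      show rf t = some s
      by_cases hpt : p.1 t = none
      · rw [hrf2 t hpt]; exact h
      · have htp : t ∈ dom p := (hdom p t).2 hpt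
        have htq : t ∈ dom q := (hdom q t).2 (by rw [h]; exact Option.some_ne_none _)
        have htR : t ∈ R := by
          rw [← hint p hp q hq hne]; exact Finset.mem_inter.2 ⟨htp, htq⟩
        rw [hrf1 t hpt, hagree p hp q hq t htR]; exact h
    exact hA (hA2A p hp) (hA2A q hq) hne ⟨r, hrp, hrq⟩
  -- apply the combinatorial lemma
  refine no_linked hdl hcc A2 hk (fun p => dom p \ R) m
    (fun p i => (dom p \ R).toList.getD i (Classical.arbitrary T)) ?_ ?_ hlink
  · intro p hp z hz
    have hzl : z ∈ (dom p \ R).toList := Finset.mem_toList.2 hz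
    obtain ⟨i, hilt, hget⟩ := List.mem_iff_getElem.1 hzl
    refine ⟨i, ?_, ?_⟩
    · calc i < (dom p \ R).toList.length := hilt
        _ = (dom p \ R).card := Finset.length_toList _
        _ ≤ (dom p).card := Finset.card_le_card (Finset.sdiff_subset)
        _ = m := (hS2sub hp.1).2
    · show (dom p \ R).toList.getD i (Classical.arbitrary T) = z
      rw [List.getD_eq_getElem _ _ hilt]; exact hget
  · intro p hp q hq hne x hxp hxq
    refine (Finset.mem_sdiff.1 hxp).2 ?_
    rw [← hint p hp q hq hne]
    exact Finset.mem_inter.2 ⟨(Finset.mem_sdiff.1 hxp).1, (Finset.mem_sdiff.1 hxq).1⟩
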